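/- Let X be a right A-Galois object. Writing α(x) = x₍₀₎ ⊗ x₍₁₎ and β(a) = a^[1] ⊗ a^[2], the following hold for all x ∈ X and a ∈ A: (i) φ(a·x₍₁₎)·x₍₀₎ = φ_X(a^[2]·x)·a^[1], i.e. (id ⊗ φ)((1 ⊗ a)·α(x)) = (id ⊗ (φ_X(·x)))(β(a)); and (ii) φ(x₍₁₎·S(a))·x₍₀₎ = φ_X(x·a^[1])·a^[2], i.e. (id ⊗ φ)(α(x)·(1 ⊗ S(a))) = ((φ_X(x·)) ⊗ id)(β(a)) after identifying the appropriate leg. -/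

import Mathlib

open TensorProduct

noncomputable section

variable (k : Type*) [Field k]

/-- Apply a linear functional to the second tensor factor. -/
def applySnd {M N : Type*} [AddCommGroup M] [Module k M]
    [AddCommGroup N] [Module k N] (f : N →ₗ[k] k) : M ⊗[k] N →ₗ[k] M :=
  (TensorProduct.rid k M).toLinearMap ∘ₗ LinearMap.lTensor M f

/-- Apply a linear functional to the first tensor factor. -/
def applyFst {M N : Type*} [AddCommGroup M] [Module k M]
    [AddCommGroup N] [Module k N] (f : M →ₗ[k] k) : M ⊗[k] N →ₗ[k] N :=
  (TensorProduct.lid k N).toLinearMap ∘ₗ LinearMap.rTensor N f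

variable (A X : Type*) [Ring A] [HopfAlgebra k A] [Ring X] [Algebra k X]

/-- The Galois map `V : X ⊗ X → X ⊗ A`, `x ⊗ y ↦ (x ⊗ 1) * α y`. -/
def galoisV (α : X →ₐ[k] X ⊗[k] A) : X ⊗[k] X →ₗ[k] X ⊗[k] A :=
  LinearMap.mul' k (X ⊗[k] A) ∘ₗ
    TensorProduct.map ((TensorProduct.mk k X A).flip 1) α.toLinearMap

/-- A Hopf algebra with bijective antipode and faithful left integral `φ`,
together with a right Galois coaction `α` on `X` with trivial coinvariants. -/
structure GaloisContext where
  φ : A →ₗ[k] k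
  φ_ne : φ ≠ 0
  φ_integral : ∀ a : A, applySnd k φ (Coalgebra.comul a) = φ a • (1 : A)
  φ_faithful_left : ∀ a : A, (∀ b : A, φ (a * b) = 0) → a = 0
  φ_faithful_right : ∀ a : A, (∀ b : A, φ (b * a) = 0) → a = 0
  antipode_bijective : Function.Bijective (HopfAlgebra.antipode (R := k) (A := A))
  α : X →ₐ[k] X ⊗[k] A
  coassoc : ∀ x : X,
    TensorProduct.assoc k X A A ((LinearMap.rTensor A α.toLinearMap) (α x))
      = LinearMap.lTensor X (Coalgebra.comul (R := k) (A := A)) (α x)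
  counit_id : ∀ x : X,
    applySnd k (Coalgebra.counit (R := k) (A := A)) (α x) = x
  coinv_trivial : ∀ x : X, α x = x ⊗ₜ[k] (1 : A) → ∃ c : k, x = c • (1 : X)
  galois : Function.Bijective (galoisV k A X α)

variable {k A X}

/-- The Galois map as a linear equivalence. -/
def GaloisContext.V (G : GaloisContext k A X) : (X ⊗[k] X) ≃ₗ[k] (X ⊗[k] A) :=
  LinearEquiv.ofBijective (galoisV k A X G.α) G.galois

/-- The map `β : A → X ⊗ X`, `a ↦ V⁻¹(1 ⊗ a)`. -/
def GaloisContext.β (G : GaloisContext k A X) : A →ₗ[k] X ⊗[k] X :=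
  G.V.symm.toLinearMap ∘ₗ TensorProduct.mk k X A 1

end

section Aux

open HopfAlgebra

variable {k : Type*} [Field k] {A X : Type*} [Ring A] [HopfAlgebra k A]
    [Ring X] [Algebra k X]

lemma applySnd_tmul {M N : Type*} [AddCommGroup M] [Module k M]
    [AddCommGroup N] [Module k N] (f : N →ₗ[k] k) (m : M) (n : N) :
    applySnd k f (m ⊗ₜ[k] n) = f n • m := by
  simp [applySnd]

lemma applyFst_tmul {M N : Type*} [AddCommGroup M] [Module k M]
    [AddCommGroup N] [Module k N] (f : M →ₗ[k] k) (m : M) (n : N) :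
    applyFst k f (m ⊗ₜ[k] n) = f m • n := by
  simp [applyFst]

lemma applySnd_one_tmul_mul (φ : A →ₗ[k] k) (y : X) (s : X ⊗[k] A) :
    applySnd k φ ((y ⊗ₜ[k] (1 : A)) * s) = y * applySnd k φ s := by
  induction s using TensorProduct.induction_on with
  | zero => simp
  | tmul m n =>
      simp [Algebra.TensorProduct.tmul_mul_tmul, applySnd_tmul, mul_smul_comm]
  | add s t hs ht => simp [mul_add, hs, ht]

lemma applySnd_mul_tmul_one (φ : A →ₗ[k] k) (z : X) (s : X ⊗[k] A) :
    applySnd k φ (s * (z ⊗ₜ[k] (1 : A))) = applySnd k φ s * z := by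
  induction s using TensorProduct.induction_on with
  | zero => simp
  | tmul m n =>
      simp [Algebra.TensorProduct.tmul_mul_tmul, applySnd_tmul, smul_mul_assoc]
  | add s t hs ht => simp [add_mul, hs, ht]

set_option maxHeartbeats 1000000 in
set_option synthInstance.maxHeartbeats 400000 in
lemma galois_key2 (G : GaloisContext k A X) (z : X) :
    LinearMap.mul' k (X ⊗[k] A)
      (TensorProduct.map G.α.toLinearMap
        ((TensorProduct.mk k X A 1) ∘ₗ (antipode k : A →ₗ[k] A)) (G.α z))
      = z ⊗ₜ[k] (1 : A) := by
  have h1 : ∀ t : X ⊗[k] A,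
      LinearMap.mul' k (X ⊗[k] A)
        (TensorProduct.map G.α.toLinearMap
          ((TensorProduct.mk k X A 1) ∘ₗ (antipode k : A →ₗ[k] A)) t)
      = LinearMap.lTensor X (LinearMap.mul' k A ∘ₗ LinearMap.lTensor A (antipode k : A →ₗ[k] A))
          (TensorProduct.assoc k X A A (LinearMap.rTensor A G.α.toLinearMap t)) := by
    intro t
    induction t using TensorProduct.induction_on with
    | zero => simp
    | tmul m p =>
        simp only [TensorProduct.map_tmul, LinearMap.rTensor_tmul, LinearMap.comp_apply,
          TensorProduct.mk_apply, AlgHom.toLinearMap_apply, LinearMap.mul'_apply]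
        generalize G.α m = u
        induction u using TensorProduct.induction_on with
        | zero => simp
        | tmul u1 u2 =>
            simp [Algebra.TensorProduct.tmul_mul_tmul]
        | add s t hs ht =>
            simp only [add_tmul, add_mul, map_add, hs, ht]
    | add s t hs ht => simp only [map_add, hs, ht]
  rw [h1, G.coassoc, ← LinearMap.lTensor_comp_apply, LinearMap.comp_assoc,
    HopfAlgebra.mul_antipode_lTensor_comul]
  have hz : LinearMap.lTensor X (Coalgebra.counit (R := k) (A := A)) (G.α z)
      = z ⊗ₜ[k] (1 : k) := by
    have h := G.counit_id z
    simp only [applySnd, LinearMap.comp_apply] at h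
    have := congrArg (TensorProduct.rid k X).symm h
    rw [LinearEquiv.coe_toLinearMap, LinearEquiv.symm_apply_apply] at this
    rw [this]
    simp [TensorProduct.rid_symm_apply]
  rw [LinearMap.lTensor_comp, LinearMap.comp_apply, hz]
  simp

lemma galois_keymap (G : GaloisContext k A X) (w : X) (s : X ⊗[k] A) :
    LinearMap.mul' k (X ⊗[k] A)
      (TensorProduct.map (G.α.toLinearMap ∘ₗ LinearMap.mulLeft k w)
        ((TensorProduct.mk k X A 1) ∘ₗ (antipode k : A →ₗ[k] A)) s)
    = G.α w * LinearMap.mul' k (X ⊗[k] A)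
      (TensorProduct.map G.α.toLinearMap
        ((TensorProduct.mk k X A 1) ∘ₗ (antipode k : A →ₗ[k] A)) s) := by
  induction s using TensorProduct.induction_on with
  | zero => simp
  | tmul m n =>
      simp only [TensorProduct.map_tmul, LinearMap.comp_apply, LinearMap.mulLeft_apply,
        LinearMap.mul'_apply, TensorProduct.mk_apply, AlgHom.toLinearMap_apply]
      rw [map_mul, mul_assoc]
  | add s t hs ht => simp only [map_add, hs, ht, mul_add]

lemma galois_keyshift (G : GaloisContext k A X) (w y : X) (g : A →ₗ[k] X ⊗[k] A)
    (s : X ⊗[k] A) :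
    TensorProduct.map (G.α.toLinearMap ∘ₗ LinearMap.mulLeft k w) g ((y ⊗ₜ[k] (1 : A)) * s)
    = TensorProduct.map (G.α.toLinearMap ∘ₗ LinearMap.mulLeft k (w * y)) g s := by
  induction s using TensorProduct.induction_on with
  | zero => simp
  | tmul m n =>
      simp [Algebra.TensorProduct.tmul_mul_tmul, mul_assoc]
  | add s t hs ht => simp only [mul_add, map_add, hs, ht]

lemma galoisV_tmul (G : GaloisContext k A X) (y z : X) :
    galoisV k A X G.α (y ⊗ₜ[k] z) = (y ⊗ₜ[k] (1 : A)) * G.α z := by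
  simp [galoisV]

lemma galoisV_beta (G : GaloisContext k A X) (a : A) :
    galoisV k A X G.α (G.β a) = (1 : X) ⊗ₜ[k] a := by
  have : galoisV k A X G.α (G.β a) = G.V (G.V.symm ((1 : X) ⊗ₜ[k] a)) := rfl
  rw [this, LinearEquiv.apply_symm_apply]

end Aux

theorem galois_object_beta_integral_formulas
    {k : Type*} [Field k] {A X : Type*} [Ring A] [HopfAlgebra k A]
    [Ring X] [Algebra k X] [Nontrivial X]
    (G : GaloisContext k A X)
    (φX : X →ₗ[k] k)
    (hφX : ∀ x : X, applySnd k G.φ (G.α x) = φX x • (1 : X))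
    (x : X) (a : A) :
    applySnd k G.φ (((1 : X) ⊗ₜ[k] a) * G.α x)
        = applySnd k (φX ∘ₗ LinearMap.mulRight k x) (G.β a) ∧
    applySnd k G.φ (G.α x * ((1 : X) ⊗ₜ[k] (HopfAlgebra.antipode (R := k) (A := A) a)))
        = applyFst k (φX ∘ₗ LinearMap.mulLeft k x) (G.β a) := by
  constructor
  · -- part (i)
    have key : (applySnd k G.φ ∘ₗ LinearMap.mulRight k (G.α x) ∘ₗ galoisV k A X G.α)
        = applySnd k (φX ∘ₗ LinearMap.mulRight k x) := by
      apply TensorProduct.ext'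
      intro y z
      simp only [LinearMap.comp_apply, galoisV_tmul, LinearMap.mulRight_apply]
      rw [mul_assoc, ← map_mul G.α, applySnd_one_tmul_mul, hφX, applySnd_tmul,
        LinearMap.comp_apply, LinearMap.mulRight_apply, mul_smul_comm, mul_one]
    have h := LinearMap.congr_fun key (G.β a)
    simp only [LinearMap.comp_apply, galoisV_beta, LinearMap.mulRight_apply] at h
    exact h
  · -- part (ii)
    have key : (applySnd k G.φ ∘ₗ (LinearMap.mul' k (X ⊗[k] A) ∘ₗ
        TensorProduct.map (G.α.toLinearMap ∘ₗ LinearMap.mulLeft k x)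
          ((TensorProduct.mk k X A 1) ∘ₗ (HopfAlgebra.antipode k : A →ₗ[k] A)))
          ∘ₗ galoisV k A X G.α)
        = applyFst k (φX ∘ₗ LinearMap.mulLeft k x) := by
      apply TensorProduct.ext'
      intro y z
      simp only [LinearMap.comp_apply, galoisV_tmul]
      rw [galois_keyshift, galois_keymap, galois_key2, applySnd_mul_tmul_one, hφX,
        applyFst_tmul, LinearMap.comp_apply, LinearMap.mulLeft_apply, smul_mul_assoc, one_mul]
    have h := LinearMap.congr_fun key (G.β a)
    simp only [LinearMap.comp_apply, galoisV_beta, TensorProduct.map_tmul,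
      LinearMap.mulLeft_apply, TensorProduct.mk_apply, LinearMap.mul'_apply,
      AlgHom.toLinearMap_apply, mul_one] at h
    exact h
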